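/- Let A be an Iwanaga-Gorenstein algebra of Gorenstein dimension at most 1, let M be a Cohen-Macaulay A-module, and let S(i) be a direct summand of the top of M. Then the submodule M_i of M fitting in a short exact sequence 0 → M_i → M → S(i) → 0 is again Cohen-Macaulay, and there is a short exact sequence 0 → rad P(i) → P(i) ⊕ M_i → M → 0. -/

import Mathlib

noncomputable section

open CategoryTheory Opposite DirectSum MulOpposite

/-- An idempotent is primitive if it is nonzero and is not the sum of two nonzero
orthogonal idempotents. -/
def IsPrimitiveIdempotent {A : Type} [Ring A] (a : A) : Prop :=
  IsIdempotentElem a ∧ a ≠ 0 ∧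
    ∀ b c : A, IsIdempotentElem b → IsIdempotentElem c → b * c = 0 → c * b = 0 →
      a = b + c → b = 0 ∨ c = 0

/-- A complete family of orthogonal idempotents. -/
def CompOrthIdem {A ι : Type} [Ring A] [Fintype ι] (e : ι → A) : Prop :=
  (∀ i j, i ≠ j → e i * e j = 0) ∧ (∀ i, IsIdempotentElem (e i)) ∧ (∑ i, e i) = 1

/-- The two-sided ideal `A e A` generated by an idempotent `e`, viewed as a
right `A`-module (i.e. a module over `Aᵐᵒᵖ`): it is the right `A`-submodule of `A`
spanned by all elements `b * e`. -/
def genIdeal {A : Type} [Ring A] (e : A) : Submodule Aᵐᵒᵖ A :=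
  Submodule.span Aᵐᵒᵖ {x | ∃ b : A, x = b * e}

/-- The indecomposable projective right module `e A` at the idempotent `e`. -/
def pIdeal {A : Type} [Ring A] (e : A) : Submodule Aᵐᵒᵖ A :=
  Submodule.span Aᵐᵒᵖ ({e} : Set A)

/-- The radical of a module: the intersection of all maximal submodules.
For a finite dimensional module `M` over a finite dimensional algebra this is `M · rad A`. -/
def radical (R M : Type) [Ring R] [AddCommGroup M] [Module R M] : Submodule R M :=
  sInf {m | IsCoatom m}

/-- `Ext¹` for right `A`-modules, as a `k`-module. -/
abbrev rext1 (k : Type) [Field k] (A : Type) [Ring A] [Algebra k A]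
    (M N : ModuleCat.{0} Aᵐᵒᵖ) : ModuleCat.{0} k :=
  ((Ext k (ModuleCat.{0} Aᵐᵒᵖ) 1).obj (op M)).obj N

/-- A right `A`-module `M` is Cohen-Macaulay if `Ext¹_A(M, A) = 0`. -/
def IsCM (k : Type) [Field k] (A : Type) [Ring A] [Algebra k A]
    (M : ModuleCat.{0} Aᵐᵒᵖ) : Prop :=
  Subsingleton (rext1 k A M (ModuleCat.of Aᵐᵒᵖ A))

/-- A module has injective dimension at most 1: it admits an injective
coresolution `0 → M → I₀ → I₁ → 0`. -/
def InjDimLE1 (R : Type) [Ring R] (M : ModuleCat.{0} R) : Prop :=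
  ∃ (I₀ I₁ : ModuleCat.{0} R) (f : M →ₗ[R] I₀) (g : I₀ →ₗ[R] I₁),
    Module.Injective R I₀ ∧ Module.Injective R I₁ ∧
    Function.Injective f ∧ Function.Surjective g ∧ Function.Exact f g

/-- A module has projective dimension at most 1: it admits a projective
resolution `0 → P₁ → P₀ → M → 0`. -/
def ProjDimLE1 (R : Type) [Ring R] (M : ModuleCat.{0} R) : Prop :=
  ∃ (P₀ P₁ : ModuleCat.{0} R) (g : P₀ →ₗ[R] M) (f : P₁ →ₗ[R] P₀),
    Module.Projective R P₀ ∧ Module.Projective R P₁ ∧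
    Function.Surjective g ∧ Function.Injective f ∧ Function.Exact f g

/-- `R` is Iwanaga-Gorenstein of Gorenstein dimension at most 1: every projective
module has injective dimension at most 1 and every injective module has projective
dimension at most 1. -/
def IwanagaGorenstein1 (R : Type) [Ring R] : Prop :=
  (∀ P : ModuleCat.{0} R, Module.Projective R P → InjDimLE1 R P) ∧
  (∀ I : ModuleCat.{0} R, Module.Injective R I → ProjDimLE1 R I)


/-! ### Auxiliary lemmas -/

/-- Factor a linear map through a surjection whose kernel it kills. -/
lemma factor_through_surj {R M₁ M₂ N : Type} [Ring R] [AddCommGroup M₁] [AddCommGroup M₂]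
    [AddCommGroup N] [Module R M₁] [Module R M₂] [Module R N]
    (f : M₁ →ₗ[R] M₂) (hf : Function.Surjective f) (g : M₁ →ₗ[R] N)
    (hle : LinearMap.ker f ≤ LinearMap.ker g) : ∃ h : M₂ →ₗ[R] N, h ∘ₗ f = g := by
  refine ⟨((LinearMap.ker f).liftQ g hle) ∘ₗ
    (f.quotKerEquivOfSurjective hf).symm.toLinearMap, ?_⟩
  ext x
  have : (f.quotKerEquivOfSurjective hf).symm (f x) = Submodule.Quotient.mk x := by
    rw [LinearEquiv.symm_apply_eq]
    rfl
  simp [this]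

lemma ext_crit {R P₂ P₁ P₀ X N : Type} [Ring R] [AddCommGroup P₂] [AddCommGroup P₁]
    [AddCommGroup P₀] [AddCommGroup X] [AddCommGroup N]
    [Module R P₂] [Module R P₁] [Module R P₀] [Module R X] [Module R N]
    (d₂ : P₂ →ₗ[R] P₁) (d₁ : P₁ →ₗ[R] P₀) (u : P₀ →ₗ[R] X)
    (h21 : LinearMap.range d₂ = LinearMap.ker d₁)
    (h10 : LinearMap.range d₁ = LinearMap.ker u) :
    (∀ φ : P₁ →ₗ[R] N, φ ∘ₗ d₂ = 0 → ∃ ψ : P₀ →ₗ[R] N, ψ ∘ₗ d₁ = φ) ↔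
    (∀ φ₀ : (LinearMap.ker u) →ₗ[R] N, ∃ ψ₀ : P₀ →ₗ[R] N,
      ∀ x : LinearMap.ker u, ψ₀ x = φ₀ x) := by
  have hd₁mem : ∀ y : P₁, d₁ y ∈ LinearMap.ker u := fun y => h10 ▸ LinearMap.mem_range_self d₁ y
  set c : P₁ →ₗ[R] LinearMap.ker u := d₁.codRestrict (LinearMap.ker u) hd₁mem with hc
  have hcsurj : Function.Surjective c := by
    rintro ⟨z, hz⟩
    rw [← h10] at hz
    obtain ⟨y, hy⟩ := hz
    exact ⟨y, Subtype.ext hy⟩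
  constructor
  · intro H φ₀
    obtain ⟨ψ, hψ⟩ := H (φ₀ ∘ₗ c) (by
      ext t
      simp only [LinearMap.comp_apply, LinearMap.zero_apply]
      have : c (d₂ t) = 0 := by
        apply Subtype.ext
        have : d₂ t ∈ LinearMap.ker d₁ := h21 ▸ LinearMap.mem_range_self d₂ t
        simpa [hc, LinearMap.codRestrict] using this
      rw [this, map_zero])
    refine ⟨ψ, ?_⟩
    rintro ⟨x, hx⟩
    obtain ⟨y, hy⟩ := hcsurj ⟨x, hx⟩
    have := LinearMap.congr_fun hψ y
    simp only [LinearMap.comp_apply] at this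
    rw [← hy]
    simpa [hc, LinearMap.codRestrict] using this
  · intro H φ hφ
    have hker : LinearMap.ker c ≤ LinearMap.ker φ := by
      intro y hy
      have : d₁ y = 0 := by
        have := congrArg Subtype.val (show c y = 0 from hy)
        simpa [hc, LinearMap.codRestrict] using this
      have : y ∈ LinearMap.range d₂ := h21 ▸ this
      obtain ⟨t, ht⟩ := this
      have := LinearMap.congr_fun hφ t
      simp only [LinearMap.comp_apply, LinearMap.zero_apply] at this
      simpa [← ht] using this
    obtain ⟨φ₀, hφ₀⟩ := factor_through_surj c hcsurj φ hker
    obtain ⟨ψ₀, hψ₀⟩ := H φ₀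
    refine ⟨ψ₀, ?_⟩
    ext y
    simp only [LinearMap.comp_apply]
    rw [show d₁ y = ((c y : LinearMap.ker u) : P₀) from rfl, hψ₀ (c y), ← hφ₀]
    rfl

lemma isZero_iff_subsingleton (R : Type) [Ring R] (M : ModuleCat.{0} R) :
    Limits.IsZero M ↔ Subsingleton M := by
  constructor
  · intro h
    have : (𝟙 M : M ⟶ M) = 0 := h.eq_of_src _ _
    exact ⟨fun a b => by
      calc a = (𝟙 M : M ⟶ M) a := rfl
      _ = (0 : M ⟶ M) b := by rw [this]; rfl
      _ = b := by rw [← this]; rfl⟩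
  · intro h; exact ModuleCat.isZero_of_subsingleton _

/-- `Ext¹(X, N) = 0` iff every map from the kernel of a (chosen) projective cover of `X`
to `N` extends to the cover. -/
lemma subsingleton_rext1_iff (k : Type) [Field k] (A : Type) [Ring A] [Algebra k A]
    (X N : ModuleCat.{0} Aᵐᵒᵖ) (P : CategoryTheory.ProjectiveResolution X) :
    Subsingleton (rext1 k A X N) ↔
    ∀ φ₀ : (LinearMap.ker ((P.π.f 0).hom : P.complex.X 0 →ₗ[Aᵐᵒᵖ] X)) →ₗ[Aᵐᵒᵖ] N,
      ∃ ψ₀ : P.complex.X 0 →ₗ[Aᵐᵒᵖ] N,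
        ∀ x : LinearMap.ker ((P.π.f 0).hom : P.complex.X 0 →ₗ[Aᵐᵒᵖ] X), ψ₀ x = φ₀ x := by
  have h21 : LinearMap.range ((P.complex.d 2 1).hom : P.complex.X 2 →ₗ[Aᵐᵒᵖ] P.complex.X 1)
      = LinearMap.ker ((P.complex.d 1 0).hom : P.complex.X 1 →ₗ[Aᵐᵒᵖ] P.complex.X 0) :=
    (ShortComplex.moduleCat_exact_iff_range_eq_ker _).1 (P.exact_succ 0)
  have h10 : LinearMap.range ((P.complex.d 1 0).hom : P.complex.X 1 →ₗ[Aᵐᵒᵖ] P.complex.X 0)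
      = LinearMap.ker ((P.π.f 0).hom : P.complex.X 0 →ₗ[Aᵐᵒᵖ] X) :=
    (ShortComplex.moduleCat_exact_iff_range_eq_ker _).1 P.exact₀
  rw [← isZero_iff_subsingleton,
    show Limits.IsZero (rext1 k A X N) ↔ _ from
      ⟨fun h => h.of_iso (P.isoExt 1 N).symm, fun h => h.of_iso (P.isoExt 1 N)⟩,
    ← HomologicalComplex.exactAt_iff_isZero_homology,
    HomologicalComplex.exactAt_iff' _ 0 1 2 (by simp) (by simp),
    ShortComplex.moduleCat_exact_iff]
  refine Iff.trans ?_ (ext_crit (N := N) (P.complex.d 2 1).hom (P.complex.d 1 0).hom (P.π.f 0).hom h21 h10)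
  constructor
  · intro H φ hφ
    obtain ⟨ψ, hψ⟩ := H (ModuleCat.ofHom φ) (ModuleCat.hom_ext hφ)
    exact ⟨ψ.hom, congrArg ModuleCat.Hom.hom hψ⟩
  · intro H x₂ hx₂
    obtain ⟨ψ, hψ⟩ := H x₂.hom (congrArg ModuleCat.Hom.hom hx₂)
    exact ⟨ModuleCat.ofHom ψ, ModuleCat.hom_ext hψ⟩

/-- If `M` is Cohen-Macaulay, `A` has injective dimension at most one and `K` embeds
into `M`, then `K` is Cohen-Macaulay. -/
lemma cm_transfer (k : Type) [Field k] (A : Type) [Ring A] [Algebra k A]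
    (M K : ModuleCat.{0} Aᵐᵒᵖ) (ι : K →ₗ[Aᵐᵒᵖ] M) (hι : Function.Injective ι)
    (hM : Subsingleton (rext1 k A M (ModuleCat.of Aᵐᵒᵖ A)))
    (hID : InjDimLE1 Aᵐᵒᵖ (ModuleCat.of Aᵐᵒᵖ A)) :
    Subsingleton (rext1 k A K (ModuleCat.of Aᵐᵒᵖ A)) := by
  obtain ⟨I₀, I₁, a, b, hI₀, hI₁, ha, hb, hab⟩ := hID
  have hba : ∀ z, b (a z) = 0 := fun z => (hab (a z)).2 ⟨z, rfl⟩
  have hainv : ∀ y : I₀, b y = 0 → ∃ z, a z = y := fun y hy => (hab y).1 hy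
  set aeq := LinearEquiv.ofInjective a ha with haeq
  have haeqv : ∀ z : LinearMap.range a, a (aeq.symm z) = z := by
    intro z
    have h2 := congrArg Subtype.val (aeq.apply_symm_apply z)
    rw [← h2]
    rfl
  -- data for `M`
  set PM := CategoryTheory.projectiveResolution M with hPM
  have huepi : Function.Surjective ((PM.π.f 0).hom : PM.complex.X 0 →ₗ[Aᵐᵒᵖ] M) :=
    (ModuleCat.epi_iff_surjective (PM.π.f 0)).1 inferInstance
  have hFproj : Module.Projective Aᵐᵒᵖ (PM.complex.X 0) :=
    (IsProjective.iff_projective (PM.complex.X 0)).2 (PM.projective 0)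
  have hextM := (subsingleton_rext1_iff k A M (ModuleCat.of Aᵐᵒᵖ A) PM).1 hM
  -- every map `M → I₁` lifts through `b`
  have hlift : ∀ Θ : M →ₗ[Aᵐᵒᵖ] I₁, ∃ Θ' : M →ₗ[Aᵐᵒᵖ] I₀, ∀ m, b (Θ' m) = Θ m := by
    intro Θ
    obtain ⟨ρ, hρ⟩ := Module.projective_lifting_property b
      (Θ ∘ₗ ((PM.π.f 0).hom : PM.complex.X 0 →ₗ[Aᵐᵒᵖ] M)) hb
    replace hρ : ∀ x, b (ρ x) = Θ (((PM.π.f 0).hom : PM.complex.X 0 →ₗ[Aᵐᵒᵖ] M) x) := by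
      intro x
      have := LinearMap.congr_fun hρ x
      exact this
    have hmem : ∀ x : LinearMap.ker ((PM.π.f 0).hom : PM.complex.X 0 →ₗ[Aᵐᵒᵖ] M),
        ρ (x : PM.complex.X 0) ∈ LinearMap.range a := by
      intro x
      apply hainv
      rw [hρ]
      have h0 : ((PM.π.f 0).hom : PM.complex.X 0 →ₗ[Aᵐᵒᵖ] M) x = 0 := (LinearMap.mem_ker).1 x.2
      rw [h0]
      exact map_zero Θ
    set σ : LinearMap.ker ((PM.π.f 0).hom : PM.complex.X 0 →ₗ[Aᵐᵒᵖ] M) →ₗ[Aᵐᵒᵖ] A :=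
      aeq.symm.toLinearMap ∘ₗ LinearMap.codRestrict (LinearMap.range a)
        (ρ ∘ₗ (LinearMap.ker ((PM.π.f 0).hom : PM.complex.X 0 →ₗ[Aᵐᵒᵖ] M)).subtype) hmem with hσ
    have hσv : ∀ x : LinearMap.ker ((PM.π.f 0).hom : PM.complex.X 0 →ₗ[Aᵐᵒᵖ] M),
        a (σ x) = ρ (x : PM.complex.X 0) := by
      intro x
      exact haeqv ⟨ρ (x : PM.complex.X 0), hmem x⟩
    obtain ⟨σ', hσ'⟩ := hextM σ
    set ρ' : PM.complex.X 0 →ₗ[Aᵐᵒᵖ] I₀ := ρ - a ∘ₗ σ' with hρ'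
    have hρ'ker : LinearMap.ker ((PM.π.f 0).hom : PM.complex.X 0 →ₗ[Aᵐᵒᵖ] M) ≤ LinearMap.ker ρ' := by
      intro x hx
      have h1 : ρ' x = ρ x - a (σ' x) := rfl
      have h2 : σ' x = σ ⟨x, hx⟩ := hσ' ⟨x, hx⟩
      have h3 : a (σ ⟨x, hx⟩) = ρ x := hσv ⟨x, hx⟩
      rw [LinearMap.mem_ker, h1, h2, h3, sub_self]
    obtain ⟨Θ', hΘ'⟩ := factor_through_surj _ huepi ρ' hρ'ker
    refine ⟨Θ', ?_⟩
    intro m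
    obtain ⟨x, rfl⟩ := huepi m
    have h3 : Θ' (((PM.π.f 0).hom : PM.complex.X 0 →ₗ[Aᵐᵒᵖ] M) x) = ρ' x :=
      LinearMap.congr_fun hΘ' x
    have h4 : b (ρ' x) = b (ρ x) - b (a (σ' x)) := by
      have : ρ' x = ρ x - a (σ' x) := rfl
      rw [this, map_sub]
    calc b (Θ' (((PM.π.f 0).hom : PM.complex.X 0 →ₗ[Aᵐᵒᵖ] M) x))
        = b (ρ' x) := congrArg b h3
      _ = b (ρ x) - b (a (σ' x)) := h4
      _ = b (ρ x) - 0 := by rw [hba]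
      _ = b (ρ x) := sub_zero _
      _ = Θ (((PM.π.f 0).hom : PM.complex.X 0 →ₗ[Aᵐᵒᵖ] M) x) := hρ x
  -- data for `K`
  set PK := CategoryTheory.projectiveResolution K with hPK
  have hπ₀epi : Function.Surjective ((PK.π.f 0).hom : PK.complex.X 0 →ₗ[Aᵐᵒᵖ] K) :=
    (ModuleCat.epi_iff_surjective (PK.π.f 0)).1 inferInstance
  rw [subsingleton_rext1_iff k A K (ModuleCat.of Aᵐᵒᵖ A) PK]
  intro φ
  -- extend `a ∘ φ` to `ψ₀ : Q₀ → I₀` by injectivity of `I₀`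
  obtain ⟨ψ₀, hψ₀⟩ := hI₀.out
    (LinearMap.ker ((PK.π.f 0).hom : PK.complex.X 0 →ₗ[Aᵐᵒᵖ] K)).subtype (Subtype.val_injective)
    ((a : A →ₗ[Aᵐᵒᵖ] I₀) ∘ₗ φ)
  replace hψ₀ : ∀ x : LinearMap.ker ((PK.π.f 0).hom : PK.complex.X 0 →ₗ[Aᵐᵒᵖ] K),
      ψ₀ (x : PK.complex.X 0) = a (φ x) := by
    intro x
    exact hψ₀ x
  -- factor `b ∘ ψ₀` through `π₀`
  obtain ⟨θ, hθ⟩ := factor_through_surj _ hπ₀epi ((b : I₀ →ₗ[Aᵐᵒᵖ] I₁) ∘ₗ ψ₀) (by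
    intro x hx
    have h1 : ψ₀ x = a (φ ⟨x, hx⟩) := hψ₀ ⟨x, hx⟩
    simp only [LinearMap.mem_ker, LinearMap.comp_apply]
    rw [h1, hba])
  replace hθ : ∀ q, θ (((PK.π.f 0).hom : PK.complex.X 0 →ₗ[Aᵐᵒᵖ] K) q) = b (ψ₀ q) := by
    intro q
    simpa only [LinearMap.comp_apply] using LinearMap.congr_fun hθ q
  -- extend `θ` to `Θ : M → I₁` by injectivity of `I₁`
  obtain ⟨Θ, hΘ⟩ := hI₁.out ι hι θ
  -- lift `Θ` through `b`
  obtain ⟨Θ', hΘ'⟩ := hlift Θ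
  set θ' : K →ₗ[Aᵐᵒᵖ] I₀ := Θ' ∘ₗ ι with hθ'def
  have hbθ' : ∀ y : K, b (θ' y) = θ y := fun y => (hΘ' (ι y)).trans (hΘ y)
  set δ : PK.complex.X 0 →ₗ[Aᵐᵒᵖ] I₀ :=
    ψ₀ - θ' ∘ₗ ((PK.π.f 0).hom : PK.complex.X 0 →ₗ[Aᵐᵒᵖ] K) with hδdef
  have hδapp : ∀ q, δ q = ψ₀ q - θ' (((PK.π.f 0).hom : PK.complex.X 0 →ₗ[Aᵐᵒᵖ] K) q) := fun q => rfl
  have hδ : ∀ q, b (δ q) = 0 := fun q =>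
    calc b (δ q)
        = b (ψ₀ q) - b (θ' (((PK.π.f 0).hom : PK.complex.X 0 →ₗ[Aᵐᵒᵖ] K) q)) := by
          rw [hδapp, map_sub]
      _ = b (ψ₀ q) - θ (((PK.π.f 0).hom : PK.complex.X 0 →ₗ[Aᵐᵒᵖ] K) q) := by
          rw [hbθ' (((PK.π.f 0).hom : PK.complex.X 0 →ₗ[Aᵐᵒᵖ] K) q)]
      _ = b (ψ₀ q) - b (ψ₀ q) := by rw [hθ q]
      _ = 0 := sub_self _
  have hδmem : ∀ q : PK.complex.X 0, δ q ∈ LinearMap.range a := fun q => hainv _ (hδ q)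
  set ψ : PK.complex.X 0 →ₗ[Aᵐᵒᵖ] A :=
    aeq.symm.toLinearMap ∘ₗ LinearMap.codRestrict (LinearMap.range a) δ hδmem with hψdef
  have hψv : ∀ q, a (ψ q) = δ q := fun q => haeqv ⟨δ q, hδmem q⟩
  refine ⟨ψ, fun x => ha ?_⟩
  have h5 : ((PK.π.f 0).hom : PK.complex.X 0 →ₗ[Aᵐᵒᵖ] K) (x : PK.complex.X 0) = 0 :=
    (LinearMap.mem_ker).1 x.2
  calc a (ψ (x : PK.complex.X 0)) = δ (x : PK.complex.X 0) := hψv _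
    _ = ψ₀ (x : PK.complex.X 0)
        - θ' (((PK.π.f 0).hom : PK.complex.X 0 →ₗ[Aᵐᵒᵖ] K) (x : PK.complex.X 0)) := hδapp _
    _ = ψ₀ (x : PK.complex.X 0) - θ' 0 := by rw [h5]; rfl
    _ = ψ₀ (x : PK.complex.X 0) := by rw [map_zero, sub_zero]
    _ = a (φ x) := hψ₀ x

/-- Over an Iwanaga-Gorenstein algebra of Gorenstein dimension at most 1,
let `M` be a Cohen-Macaulay module and let `S(i)` be a direct summand of `top M`,
witnessed by a surjection `p : M → S(i) = P(i)/rad P(i)`. Then the submodule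
`M_i = ker p`, which fits in the short exact sequence `0 → M_i → M → S(i) → 0`, is again
Cohen-Macaulay, and there is a short exact sequence
`0 → rad P(i) → P(i) ⊕ M_i → M → 0`. -/
theorem remove_simple_from_top
    (k A ιQ : Type) [Field k] [IsAlgClosed k] [Ring A] [Algebra k A] [FiniteDimensional k A]
    [Fintype ιQ] (e : ιQ → A) (hco : CompOrthIdem e)
    (hprim : ∀ j, IsPrimitiveIdempotent (e j))
    (hIG : IwanagaGorenstein1 Aᵐᵒᵖ) (i : ιQ)
    (M : ModuleCat.{0} Aᵐᵒᵖ) [Module.Finite Aᵐᵒᵖ M] (hM : IsCM k A M)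
    (p : M →ₗ[Aᵐᵒᵖ] (↥(pIdeal (e i)) ⧸ radical Aᵐᵒᵖ ↥(pIdeal (e i))))
    (hp : Function.Surjective p) :
    IsCM k A (ModuleCat.of Aᵐᵒᵖ ↥(LinearMap.ker p)) ∧
    ∃ (f : ↥(radical Aᵐᵒᵖ ↥(pIdeal (e i))) →ₗ[Aᵐᵒᵖ] (↥(pIdeal (e i)) × ↥(LinearMap.ker p)))
      (g : (↥(pIdeal (e i)) × ↥(LinearMap.ker p)) →ₗ[Aᵐᵒᵖ] M),
      Function.Injective f ∧ Function.Surjective g ∧ Function.Exact f g := by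
  classical
  have hidem : e i * e i = e i := (hprim i).1
  have he : e i ∈ pIdeal (e i) := Submodule.mem_span_singleton_self _
  set ε : ↥(pIdeal (e i)) := ⟨e i, he⟩ with hεdef
  have hmul : ∀ x : ↥(pIdeal (e i)), e i * (x : A) = (x : A) := by
    rintro ⟨x, hx⟩
    obtain ⟨c, hc⟩ := Submodule.mem_span_singleton.1 hx
    have hx' : x = e i * c.unop := by rw [← hc]; rfl
    show e i * x = x
    rw [hx', ← mul_assoc, hidem]
  obtain ⟨m₀, hm₀⟩ := hp (Submodule.Quotient.mk ε)
  set m₁ : M := (MulOpposite.op (e i)) • m₀ with hm₁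
  set φ : ↥(pIdeal (e i)) →ₗ[Aᵐᵒᵖ] M :=
    { toFun := fun x => (MulOpposite.op (x : A)) • m₁
      map_add' := fun x y => by
        show (MulOpposite.op ((x : A) + (y : A))) • m₁ = _
        rw [MulOpposite.op_add, add_smul]
      map_smul' := fun c x => by
        have h1 : ((c • x : ↥(pIdeal (e i))) : A) = (x : A) * c.unop := rfl
        show (MulOpposite.op ((c • x : ↥(pIdeal (e i))) : A)) • m₁ = c • ((MulOpposite.op (x : A)) • m₁)
        rw [h1, show MulOpposite.op ((x : A) * c.unop) = c * MulOpposite.op (x : A) by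
          rw [MulOpposite.op_mul, MulOpposite.op_unop], mul_smul] } with hφdef
  have hpφ : ∀ x : ↥(pIdeal (e i)), p (φ x) = Submodule.Quotient.mk x := by
    have h1 : p m₁ = Submodule.Quotient.mk ε := by
      rw [hm₁, map_smul, hm₀, ← Submodule.Quotient.mk_smul]
      congr 1
      apply Subtype.ext
      show e i * e i = e i
      exact hidem
    intro x
    show p ((MulOpposite.op (x : A)) • m₁) = _
    rw [map_smul, h1, ← Submodule.Quotient.mk_smul]
    congr 1
    apply Subtype.ext
    show e i * (x : A) = (x : A)
    exact hmul x
  -- the surjection `g : P(i) ⊕ M_i → M`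
  set g : (↥(pIdeal (e i)) × ↥(LinearMap.ker p)) →ₗ[Aᵐᵒᵖ] M :=
    φ ∘ₗ LinearMap.fst _ _ _ + (LinearMap.ker p).subtype ∘ₗ LinearMap.snd _ _ _ with hgdef
  have hgapp : ∀ x m, g (x, m) = φ x + (m : M) := fun x m => rfl
  have hgsurj : Function.Surjective g := by
    intro m
    obtain ⟨x, hx⟩ := Submodule.Quotient.mk_surjective _ (p m)
    refine ⟨(x, ⟨m - φ x, ?_⟩), ?_⟩
    · rw [LinearMap.mem_ker, map_sub, hpφ, hx, sub_self]
    · rw [hgapp]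
      show φ x + (m - φ x) = m
      abel
  -- the injection `f : rad P(i) → P(i) ⊕ M_i`
  have hmemf : ∀ r : ↥(radical Aᵐᵒᵖ ↥(pIdeal (e i))),
      φ ((r : ↥(pIdeal (e i)))) ∈ LinearMap.ker p := by
    intro r
    rw [LinearMap.mem_ker, hpφ, Submodule.Quotient.mk_eq_zero]
    exact r.2
  set c : ↥(radical Aᵐᵒᵖ ↥(pIdeal (e i))) →ₗ[Aᵐᵒᵖ] ↥(LinearMap.ker p) :=
    LinearMap.codRestrict _ (φ ∘ₗ (radical Aᵐᵒᵖ ↥(pIdeal (e i))).subtype) hmemf with hcdef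
  set f : ↥(radical Aᵐᵒᵖ ↥(pIdeal (e i))) →ₗ[Aᵐᵒᵖ] (↥(pIdeal (e i)) × ↥(LinearMap.ker p)) :=
    LinearMap.prod ((radical Aᵐᵒᵖ ↥(pIdeal (e i))).subtype) (-c) with hfdef
  have hfapp : ∀ r, f r = ((r : ↥(pIdeal (e i))), -(c r)) := fun r => rfl
  have hfinj : Function.Injective f := by
    intro x y hxy
    have := congrArg Prod.fst hxy
    rw [hfapp, hfapp] at hxy
    exact Subtype.ext (congrArg Prod.fst hxy)
  have hexact : Function.Exact f g := by
    rw [LinearMap.exact_iff]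
    apply le_antisymm
    · rintro ⟨x, m⟩ hxm
      have h0 : φ x + (m : M) = 0 := hxm
      have hmx : (m : M) = -(φ x) := eq_neg_of_add_eq_zero_right h0
      have hxrad : x ∈ radical Aᵐᵒᵖ ↥(pIdeal (e i)) := by
        rw [← Submodule.Quotient.mk_eq_zero, ← hpφ x]
        have h2 : p (φ x) + p (m : M) = 0 := by rw [← map_add, h0, map_zero]
        have h3 : p (m : M) = 0 := (LinearMap.mem_ker).1 m.2
        rw [h3, add_zero] at h2
        exact h2
      refine ⟨⟨x, hxrad⟩, ?_⟩
      rw [hfapp]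
      refine Prod.ext rfl ?_
      apply Subtype.ext
      show (-(c ⟨x, hxrad⟩) : ↥(LinearMap.ker p)).val = (m : M)
      have : (c ⟨x, hxrad⟩ : M) = φ x := rfl
      rw [show ((-(c ⟨x, hxrad⟩) : ↥(LinearMap.ker p)) : M) = -(c ⟨x, hxrad⟩ : M) from rfl,
        this]
      exact hmx.symm
    · rintro _ ⟨r, rfl⟩
      refine LinearMap.mem_ker.2 ?_
      have h1 : g (f r) = φ (r : ↥(pIdeal (e i))) + ((-(c r) : ↥(LinearMap.ker p)) : M) := rfl
      have h2 : ((-(c r) : ↥(LinearMap.ker p)) : M) = -(φ (r : ↥(pIdeal (e i)))) := rfl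
      rw [h1, h2, add_neg_cancel]
  constructor
  · -- Cohen-Macaulayness of `M_i`
    have hAproj : Module.Projective Aᵐᵒᵖ A := by
      refine Module.Projective.of_equiv' (M := Aᵐᵒᵖ)
        { toFun := MulOpposite.unop, invFun := MulOpposite.op,
          map_add' := fun x y => rfl, map_smul' := fun r x => rfl,
          left_inv := fun x => rfl, right_inv := fun x => rfl }
    have hID : InjDimLE1 Aᵐᵒᵖ (ModuleCat.of Aᵐᵒᵖ A) :=
      hIG.1 (ModuleCat.of Aᵐᵒᵖ A) hAproj
    exact cm_transfer k A M (ModuleCat.of Aᵐᵒᵖ ↥(LinearMap.ker p))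
      (LinearMap.ker p).subtype (Subtype.val_injective) hM hID
  · exact ⟨f, g, hfinj, hgsurj, hexact⟩
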